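/- With the measure V₃(w) = Σ_{j=1}^{k} Σ_{i=0}^{k-j} 2^i · n_j as above, applying a rule of shape s·t → t'·s' (moving the p-th sink letter one step left without increasing total length) yields a word w' with V₃(w') = V₃(w) − 2^{k−p}, where k is the number of sink letters in w; in particular V₃ strictly decreases. -/
import Mathlib


/-- Number of sink letters (non-source letters) of a word. -/
def sinkCount {A : Type*} (isS : A → Bool) (w : List A) : ℕ :=
  w.countP fun a => !isS a

/-- V₃(w) = Σ_{j=1}^{k} Σ_{i=0}^{k-j} 2^i · n_j for w = S₁t₁S₂t₂⋯S_k t_k S_{k+1}: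
each source letter contributes 2^m − 1 where m is the number of sink letters
strictly to its right. -/
def V3 {A : Type*} (isS : A → Bool) : List A → ℕ
  | [] => 0
  | a :: w => (if isS a then 2 ^ sinkCount isS w - 1 else 0) + V3 isS w

lemma sinkCount_append {A : Type*} (isS : A → Bool) (u v : List A) :
    sinkCount isS (u ++ v) = sinkCount isS u + sinkCount isS v := by
  simp [sinkCount, List.countP_append]

lemma key_eq {A : Type*} (isS : A → Bool)
    (u v : List A) (s t t' s' : A)
    (hs : isS s = true) (ht : isS t = false)
    (ht' : isS t' = false) (hs' : isS s' = true) :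
    V3 isS (u ++ [t', s'] ++ v) + 2 ^ sinkCount isS v = V3 isS (u ++ [s, t] ++ v) := by
  induction u with
  | nil =>
    have h2 : (1:ℕ) ≤ 2 ^ sinkCount isS v := Nat.one_le_two_pow
    simp [V3, sinkCount, ht, ht', hs, hs', pow_succ]
    omega
  | cons a u ih =>
    simp only [List.cons_append, V3, List.append_eq] at *
    have hc : sinkCount isS (u ++ [t', s'] ++ v) = sinkCount isS (u ++ [s, t] ++ v) := by
      simp [sinkCount_append, sinkCount, ht, ht', hs, hs']
    rw [hc]
    omega

/-- Class (B) case of the termination theorem (Section 5.1): applying a rule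
s·t → t'·s' moving the p-th sink letter one step left gives
V₃(w') = V₃(w) − 2^{k−p}, where k − p is the number of sink letters to the right
of the rewritten occurrence; in particular V₃ strictly decreases. -/
theorem stmt_8 {A : Type*} (isS : A → Bool)
    (u v : List A) (s t t' s' : A)
    (hs : isS s = true) (ht : isS t = false)
    (ht' : isS t' = false) (hs' : isS s' = true) :
    V3 isS (u ++ [t', s'] ++ v) + 2 ^ sinkCount isS v = V3 isS (u ++ [s, t] ++ v) ∧
    V3 isS (u ++ [t', s'] ++ v) < V3 isS (u ++ [s, t] ++ v) := by
  have h := key_eq isS u v s t t' s' hs ht ht' hs'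
  have h2 : (1:ℕ) ≤ 2 ^ sinkCount isS v := Nat.one_le_two_pow
  exact ⟨h, by omega⟩
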